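/- Let K be a finite abstract simplicial complex on a finite linearly ordered vertex set V that is pure of dimension d. Let L_K be the language of K, and let L_K^max ⊆ List V be the language consisting of all strictly increasing lists whose set of entries is a maximal simplex of K. Then the number of distinct nonempty left quotients of L_K is at least the number of distinct nonempty left quotients of L_K^max. (Equivalently: the minimal deterministic automaton recognizing L_K has at least as many states as the minimal deterministic automaton recognizing L_K^max.) -/

import Mathlib

/-- An abstract simplicial complex on vertex type `V`, given as a finite
collection of nonempty finite subsets of `V` closed under taking nonempty subsets. -/
def IsSimplicialComplex {V : Type*} [DecidableEq V] (K : Finset (Finset V)) : Prop :=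
  (∀ σ ∈ K, σ ≠ ∅) ∧ ∀ σ ∈ K, ∀ τ, τ ⊆ σ → τ ≠ ∅ → τ ∈ K

/-- `K` has dimension exactly `d`: some simplex has `d + 1` vertices and all
simplices have at most `d + 1` vertices. -/
def HasDimension {V : Type*} [DecidableEq V] (K : Finset (Finset V)) (d : ℕ) : Prop :=
  (∃ σ ∈ K, σ.card = d + 1) ∧ ∀ σ ∈ K, σ.card ≤ d + 1

/-- The maximal simplices of `K`: those not properly contained in any other simplex of `K`. -/
def maximalSimplices {V : Type*} [DecidableEq V] (K : Finset (Finset V)) : Finset (Finset V) :=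
  K.filter (fun σ => ∀ τ ∈ K, σ ⊆ τ → σ = τ)

/-- `K` is pure of dimension `d`: `K` has dimension `d` and every maximal simplex
has exactly `d + 1` vertices. -/
def IsPure {V : Type*} [DecidableEq V] (K : Finset (Finset V)) (d : ℕ) : Prop :=
  HasDimension K d ∧ ∀ σ ∈ maximalSimplices K, σ.card = d + 1

/-- The language of a simplicial complex `K`: the empty list together with all
strictly increasing lists whose set of entries is a simplex of `K`. -/
def simplexLang {V : Type*} [LinearOrder V] (K : Finset (Finset V)) : Set (List V) :=
  {[]} ∪ {l | l.Pairwise (· < ·) ∧ l.toFinset ∈ K}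

/-- The language of maximal simplices of `K`: all strictly increasing lists whose set
of entries is a maximal simplex of `K`. -/
def maxSimplexLang {V : Type*} [LinearOrder V] (K : Finset (Finset V)) : Set (List V) :=
  {l | l.Pairwise (· < ·) ∧ l.toFinset ∈ maximalSimplices K}

/-- The left quotient `u⁻¹L = {w | u ++ w ∈ L}`. -/
def leftQuot {V : Type*} (L : Set (List V)) (u : List V) : Set (List V) :=
  {w | u ++ w ∈ L}

/-- The set of distinct nonempty left quotients of a language `L`. -/
def nonemptyQuotients {V : Type*} (L : Set (List V)) : Set (Set (List V)) :=
  {S | S.Nonempty ∧ ∃ u : List V, S = leftQuot L u}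

section Aux

set_option linter.unusedSectionVars false
variable {V : Type*} [Fintype V] [LinearOrder V]

lemma maximal_iff_card' {K : Finset (Finset V)} {d : ℕ}
    (hpure : IsPure K d) {σ : Finset V} (hσ : σ ∈ K) :
    σ ∈ maximalSimplices K ↔ σ.card = d + 1 := by
  constructor
  · exact fun h => hpure.2 σ h
  · intro h
    simp only [maximalSimplices, Finset.mem_filter]
    exact ⟨hσ, fun τ hτ hsub =>
      Finset.eq_of_subset_of_card_le hsub (by rw [h]; exact hpure.1.2 τ hτ)⟩

lemma len_le_of_quotK {K : Finset (Finset V)} {d : ℕ} (hpure : IsPure K d)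
    {u w : List V} (hw : w ∈ leftQuot (simplexLang K) u) :
    u.length + w.length ≤ d + 1 := by
  rcases hw with h | ⟨hs, hm⟩
  · simp only [Set.mem_singleton_iff, List.append_eq_nil_iff] at h
    simp [h.1, h.2]
  · have hlen : (u ++ w).toFinset.card = (u ++ w).length :=
      List.toFinset_card_of_nodup hs.nodup
    have := hpure.1.2 _ hm
    rw [hlen, List.length_append] at this
    exact this

lemma quotMax_len {K : Finset (Finset V)} {d : ℕ} (hpure : IsPure K d)
    {u w : List V} (hw : w ∈ leftQuot (maxSimplexLang K) u) :
    u.length + w.length = d + 1 := by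
  obtain ⟨hs, hm⟩ := hw
  have hlen : (u ++ w).toFinset.card = (u ++ w).length :=
    List.toFinset_card_of_nodup hs.nodup
  have := hpure.2 _ hm
  rw [hlen, List.length_append] at this
  exact this

lemma quotMax_sub_quotK {K : Finset (Finset V)} {u : List V} :
    leftQuot (maxSimplexLang K) u ⊆ leftQuot (simplexLang K) u := by
  intro w ⟨hs, hm⟩
  simp only [maximalSimplices, Finset.mem_filter] at hm
  exact Or.inr ⟨hs, hm.1⟩

lemma key_eq {K : Finset (Finset V)} {d : ℕ} (hpure : IsPure K d)
    {u : List V} (hne : (leftQuot (maxSimplexLang K) u).Nonempty) :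
    {w ∈ leftQuot (simplexLang K) u |
      ∀ w' ∈ leftQuot (simplexLang K) u, w'.length ≤ w.length}
      = leftQuot (maxSimplexLang K) u := by
  obtain ⟨w0, hw0⟩ := hne
  have hw0len := quotMax_len hpure hw0
  ext w
  constructor
  · rintro ⟨hwK, hmax⟩
    have h1 : w0.length ≤ w.length := hmax w0 (quotMax_sub_quotK hw0)
    have h2 : u.length + w.length ≤ d + 1 := len_le_of_quotK hpure hwK
    have hlen : u.length + w.length = d + 1 := by omega
    rcases hwK with h | ⟨hs, hm⟩
    · simp only [Set.mem_singleton_iff, List.append_eq_nil_iff] at h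
      rw [h.1, h.2] at hlen; simp at hlen
    · refine ⟨hs, (maximal_iff_card' hpure hm).mpr ?_⟩
      rw [List.toFinset_card_of_nodup hs.nodup, List.length_append, hlen]
  · intro hw
    refine ⟨quotMax_sub_quotK hw, fun w' hw' => ?_⟩
    have h1 := quotMax_len hpure hw
    have h2 := len_le_of_quotK hpure hw'
    omega

lemma quotK_finite (K : Finset (Finset V)) (d : ℕ) (hpure : IsPure K d) :
    (nonemptyQuotients (simplexLang K)).Finite := by
  have hT : {l : List V | l.length ≤ Fintype.card V}.Finite :=
    List.finite_length_le V (Fintype.card V)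
  refine Set.Finite.subset hT.finite_subsets ?_
  rintro S ⟨-, u, rfl⟩
  intro w hw
  rcases hw with h | ⟨hs, -⟩
  · simp only [Set.mem_singleton_iff, List.append_eq_nil_iff] at h
    simp [h.2]
  · have : (u ++ w).length ≤ Fintype.card V := hs.nodup.length_le_card
    rw [List.length_append] at this
    simp only [Set.mem_setOf_eq]
    omega

end Aux

theorem stmt5 {V : Type*} [Fintype V] [LinearOrder V]
    (K : Finset (Finset V)) (d : ℕ)
    (hK : IsSimplicialComplex K) (hpure : IsPure K d) :
    (nonemptyQuotients (maxSimplexLang K)).ncard ≤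
      (nonemptyQuotients (simplexLang K)).ncard := by
  have hfin := quotK_finite K d hpure
  have hsub : nonemptyQuotients (maxSimplexLang K) ⊆
      (fun Q => {w ∈ Q | ∀ w' ∈ Q, w'.length ≤ w.length}) '' nonemptyQuotients (simplexLang K) := by
    rintro S ⟨hSne, u, rfl⟩
    refine ⟨leftQuot (simplexLang K) u, ⟨?_, u, rfl⟩, key_eq hpure hSne⟩
    obtain ⟨w0, hw0⟩ := hSne
    exact ⟨w0, quotMax_sub_quotK hw0⟩
  calc (nonemptyQuotients (maxSimplexLang K)).ncard
      ≤ ((fun Q => {w ∈ Q | ∀ w' ∈ Q, w'.length ≤ w.length}) ''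
          nonemptyQuotients (simplexLang K)).ncard :=
        Set.ncard_le_ncard hsub (hfin.image _)
    _ ≤ (nonemptyQuotients (simplexLang K)).ncard := Set.ncard_image_le hfin
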